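/- Let K be a field, let M ∈ K^{s×m} be a matrix of full rank s with s ≤ m, and let D ∈ K^{m×d} (with d = m − s) be a matrix whose columns form a basis of ker(M) (so that M·D = 0 and D has trivial kernel). Then there exists a nonzero scalar δ ∈ K such that for every subset I ⊆ {1,…,m} with |I| = s, writing I^c = {1,…,m}∖I, one has δ · det([Dᵀ]_{[d],I^c}) = sgn(τ_I) · det([M]_{[s],I}), where [Dᵀ]_{[d],I^c} denotes the d×d submatrix of Dᵀ with columns indexed by I^c, [M]_{[s],I} denotes the s×s submatrix of M with columns indexed by I, and τ_I is the permutation sending (1,…,m) to (i_1,…,i_s, j_1,…,j_d) with I = {i_1<⋯<i_s} and I^c = {j_1<⋯<j_d}. -/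

import Mathlib

open Matrix

/-- Gale duality for maximal minors.  `M` is a full-rank `s × (s+d)`
matrix over a field `K`, the columns of `D` form a basis of `ker M`.  Then there
is a nonzero scalar `δ` such that, for every `I` of cardinality `s`,
`δ · det([Dᵀ]_{[d],Iᶜ}) = sgn(τ_I) · det([M]_{[s],I})`, where `τ_I` is the
permutation listing `I` in increasing order followed by `Iᶜ` in increasing order. -/
theorem stmt1 {K : Type*} [Field K] {s d : ℕ}
    (M : Matrix (Fin s) (Fin (s + d)) K)
    (D : Matrix (Fin (s + d)) (Fin d) K)
    (hrank : M.rank = s)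
    (hMD : M * D = 0)
    (hDindep : LinearIndependent K fun j : Fin d => fun i : Fin (s + d) => D i j)
    (hDspan : ∀ v : Fin (s + d) → K, M.mulVec v = 0 → ∃ c : Fin d → K, v = D.mulVec c) :
    ∃ δ : K, δ ≠ 0 ∧
      ∀ (I : Finset (Fin (s + d))) (hI : I.card = s) (hIc : Iᶜ.card = d)
        (τ : Equiv.Perm (Fin (s + d))),
        (∀ k : Fin s, τ (Fin.castAdd d k) = (I.orderIsoOfFin hI k : Fin (s + d))) →
        (∀ k : Fin d, τ (Fin.natAdd s k) = (Iᶜ.orderIsoOfFin hIc k : Fin (s + d))) →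
        δ * (D.transpose.submatrix id fun c : Fin d =>
              (Iᶜ.orderIsoOfFin hIc c : Fin (s + d))).det
          = ((Equiv.Perm.sign τ : ℤ) : K) *
            (M.submatrix id fun c : Fin s => (I.orderIsoOfFin hI c : Fin (s + d))).det := by
  classical
  -- rows of M are linearly independent
  have hMrows : LinearIndependent K (fun i : Fin s => M i) := by
    rw [linearIndependent_iff_card_eq_finrank_span, Set.finrank,
      show (Set.range fun i : Fin s => M i) = Set.range M.row from rfl,
      ← Matrix.rank_eq_finrank_span_row, hrank, Fintype.card_fin]
  -- complement of the row space
  obtain ⟨Wc, hWc⟩ := Submodule.exists_isCompl (Submodule.span K (Set.range M))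
  have hfinW : Module.finrank K Wc = d := by
    have h1 := Submodule.finrank_add_eq_of_isCompl hWc
    have h2 : Module.finrank K (Submodule.span K (Set.range M)) = s := by
      rw [show Set.range M = Set.range M.row from rfl, ← Matrix.rank_eq_finrank_span_row, hrank]
    have h3 : Module.finrank K (Fin (s + d) → K) = s + d := by
      simp [Module.finrank_pi]
    omega
  let b : Module.Basis (Fin d) K Wc := Module.finBasisOfFinrankEq K Wc hfinW
  set N : Matrix (Fin d) (Fin (s + d)) K :=
    Matrix.of fun k => (Wc.subtype (b k)) with hNdef
  have hNrows : LinearIndependent K (fun k : Fin d => N k) :=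
    b.linearIndependent.map' Wc.subtype Wc.ker_subtype
  have hNspan : Submodule.span K (Set.range fun k : Fin d => N k) = Wc := by
    have h4 : (Set.range fun k : Fin d => N k) = Wc.subtype '' Set.range ⇑b := by
      rw [← Set.range_comp]; rfl
    rw [h4, ← Submodule.map_span, b.span_eq, Submodule.map_top, Submodule.range_subtype]
  -- stacked matrix
  set E' : Matrix (Fin s ⊕ Fin d) (Fin (s + d)) K :=
    Matrix.of (Sum.elim (fun i => M i) (fun k => N k)) with hE'def
  have hE'rows : LinearIndependent K (fun p => E' p) := by
    have := hMrows.sum_type hNrows (by rw [hNspan]; exact hWc.disjoint)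
    exact this
  set E : Matrix (Fin (s + d)) (Fin (s + d)) K :=
    E'.submatrix ⇑finSumFinEquiv.symm id with hEdef
  have hErows : LinearIndependent K (fun i => E i) := by
    have h5 : (fun i => E i) = (fun p => E' p) ∘ ⇑finSumFinEquiv.symm := rfl
    rw [h5]
    exact hE'rows.comp _ finSumFinEquiv.symm.injective
  have hEunit : IsUnit E := Matrix.linearIndependent_rows_iff_isUnit.mp hErows
  have hEdet : E.det ≠ 0 := ((Matrix.isUnit_iff_isUnit_det E).mp hEunit).ne_zero
  -- D has injective mulVec
  have hDinj : Function.Injective D.mulVec := by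
    rw [Matrix.mulVec_injective_iff]
    exact hDindep
  -- N * D is invertible
  have hNDinj : Function.Injective (N * D).mulVec := by
    intro c₁ c₂ hcc
    have hc : (N * D) *ᵥ (c₁ - c₂) = 0 := by
      rw [Matrix.mulVec_sub, hcc, sub_self]
    have h0 : E *ᵥ (D *ᵥ (c₁ - c₂)) = 0 := by
      funext i
      show E' (finSumFinEquiv.symm i) ⬝ᵥ (D *ᵥ (c₁ - c₂)) = 0
      cases hsi : finSumFinEquiv.symm i with
      | inl i' =>
        have hM0 : M *ᵥ (D *ᵥ (c₁ - c₂)) = 0 := by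
          rw [Matrix.mulVec_mulVec, hMD, Matrix.zero_mulVec]
        exact congrFun hM0 i'
      | inr k =>
        have hN0 : N *ᵥ (D *ᵥ (c₁ - c₂)) = 0 := by
          rw [Matrix.mulVec_mulVec]; exact hc
        exact congrFun hN0 k
    have hD0 : D *ᵥ (c₁ - c₂) = 0 := by
      have hEinj : Function.Injective E.mulVec :=
        Matrix.mulVec_injective_iff_isUnit.mpr hEunit
      exact hEinj (a₁ := D *ᵥ (c₁ - c₂)) (a₂ := 0) (by rw [h0, Matrix.mulVec_zero])
    have h6 : c₁ - c₂ = 0 := hDinj (a₂ := 0) (by rw [hD0, Matrix.mulVec_zero])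
    exact sub_eq_zero.mp h6
  have hNDunit : IsUnit (N * D) := Matrix.mulVec_injective_iff_isUnit.mp hNDinj
  have hNDdet : (N * D).det ≠ 0 := ((Matrix.isUnit_iff_isUnit_det _).mp hNDunit).ne_zero
  -- the scalar
  refine ⟨E.det * ((N * D).det)⁻¹, mul_ne_zero hEdet (inv_ne_zero hNDdet), ?_⟩
  intro I hI hIc τ hτ₁ hτ₂
  set f : Fin s → Fin (s + d) := fun c => (I.orderIsoOfFin hI c : Fin (s + d)) with hf
  set g : Fin d → Fin (s + d) := fun c => (Iᶜ.orderIsoOfFin hIc c : Fin (s + d)) with hg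
  have hfI : ∀ k, f k ∈ I := fun k => (I.orderIsoOfFin hI k).2
  have hgI : ∀ k, g k ∈ Iᶜ := fun k => (Iᶜ.orderIsoOfFin hIc k).2
  have hfinj : Function.Injective f := fun a b hab =>
    (I.orderIsoOfFin hI).injective (Subtype.ext hab)
  -- auxiliary square matrix
  set Wb : Matrix (Fin (s + d)) (Fin s ⊕ Fin d) K :=
    Matrix.of fun i => Sum.elim (fun k => if i = f k then (1 : K) else 0)
      (fun k => D i k) with hWbdef
  have hEW : E' * Wb = Matrix.fromBlocks (M.submatrix id f) 0 (N.submatrix id f) (N * D) := by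
    ext p q
    rcases p with i | i <;> rcases q with k | k
    · simp [Matrix.mul_apply, hWbdef, hE'def, Finset.sum_ite_eq']
    · have := congrFun (congrFun hMD i) k
      simp only [Matrix.mul_apply] at this ⊢
      simpa [hWbdef, hE'def] using this
    · simp [Matrix.mul_apply, hWbdef, hE'def, Finset.sum_ite_eq']
    · simp [Matrix.mul_apply, hWbdef, hE'def]
  set Wm : Matrix (Fin (s + d)) (Fin (s + d)) K := Wb.submatrix id ⇑finSumFinEquiv.symm
    with hWmdef
  have hEWm : E * Wm = (E' * Wb).submatrix ⇑finSumFinEquiv.symm ⇑finSumFinEquiv.symm := by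
    have h7 := Matrix.submatrix_mul_equiv E' Wb (⇑finSumFinEquiv.symm)
      (Equiv.refl (Fin (s + d))) (⇑finSumFinEquiv.symm)
    simpa using h7
  have eq1 : E.det * Wm.det = (M.submatrix id f).det * (N * D).det := by
    rw [← Matrix.det_mul, hEWm, Matrix.det_submatrix_equiv_self, hEW,
      Matrix.det_fromBlocks_zero₁₂]
  set V : Matrix (Fin s ⊕ Fin d) (Fin s ⊕ Fin d) K :=
    Wb.submatrix (fun p => τ (finSumFinEquiv p)) id with hVdef
  have hVblocks : V = Matrix.fromBlocks 1 (Matrix.of fun k k' => D (f k) k') 0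
      (Matrix.of fun k k' => D (g k) k') := by
    ext p q
    rcases p with k | k <;> rcases q with k' | k'
    · have h8 : τ (finSumFinEquiv (Sum.inl k)) = f k := by
        rw [finSumFinEquiv_apply_left]; exact hτ₁ k
      simp only [hVdef, Matrix.submatrix_apply, h8, hWbdef, Matrix.of_apply, Sum.elim_inl,
        Matrix.fromBlocks_apply₁₁, Matrix.one_apply, id_eq]
      by_cases hk : k = k'
      · simp [hk]
      · rw [if_neg (fun h => hk (hfinj h)), if_neg hk]
    · have h8 : τ (finSumFinEquiv (Sum.inl k)) = f k := by
        rw [finSumFinEquiv_apply_left]; exact hτ₁ k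
      simp [hVdef, hWbdef, finSumFinEquiv_apply_left, hτ₁ k,
        show (I.orderEmbOfFin hI) k = f k from rfl]
    · have h9 : τ (finSumFinEquiv (Sum.inr k)) = g k := by
        rw [finSumFinEquiv_apply_right]; exact hτ₂ k
      have h10 : g k ≠ f k' := fun h => (Finset.mem_compl.mp (hgI k)) (h ▸ hfI k')
      simp [hVdef, hWbdef, finSumFinEquiv_apply_right, hτ₂ k,
        show (Iᶜ.orderEmbOfFin hIc) k = g k from rfl, h10]
    · have h9 : τ (finSumFinEquiv (Sum.inr k)) = g k := by
        rw [finSumFinEquiv_apply_right]; exact hτ₂ k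
      simp [hVdef, hWbdef, finSumFinEquiv_apply_right, hτ₂ k,
        show (Iᶜ.orderEmbOfFin hIc) k = g k from rfl]
  have eq2 : V.det = (D.transpose.submatrix id g).det := by
    rw [hVblocks, Matrix.det_fromBlocks_zero₂₁, Matrix.det_one, one_mul,
      show (Matrix.of fun k k' => D (g k) k') = (D.transpose.submatrix id g).transpose from rfl,
      Matrix.det_transpose]
  have eq3 : V.det = ((Equiv.Perm.sign τ : ℤ) : K) * Wm.det := by
    have h11 : Wm.submatrix ⇑τ id = V.submatrix ⇑finSumFinEquiv.symm ⇑finSumFinEquiv.symm := by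
      ext i j
      simp [hWmdef, hVdef, Equiv.apply_symm_apply]
    calc V.det = (V.submatrix ⇑finSumFinEquiv.symm ⇑finSumFinEquiv.symm).det :=
          (Matrix.det_submatrix_equiv_self _ _).symm
      _ = (Wm.submatrix ⇑τ id).det := by rw [h11]
      _ = ((Equiv.Perm.sign τ : ℤ) : K) * Wm.det := by
          rw [Matrix.det_permute]
  calc E.det * ((N * D).det)⁻¹ * (D.transpose.submatrix id g).det
      = E.det * ((N * D).det)⁻¹ * (((Equiv.Perm.sign τ : ℤ) : K) * Wm.det) := by
        rw [← eq2, eq3]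
    _ = ((Equiv.Perm.sign τ : ℤ) : K) * ((E.det * Wm.det) * ((N * D).det)⁻¹) := by ring
    _ = ((Equiv.Perm.sign τ : ℤ) : K) *
        (((M.submatrix id f).det * (N * D).det) * ((N * D).det)⁻¹) := by rw [eq1]
    _ = ((Equiv.Perm.sign τ : ℤ) : K) * (M.submatrix id f).det := by
        rw [mul_inv_cancel_right₀ hNDdet]
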